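/- Let G be a finite directed graph containing a spanning subgraph G₀ (same vertex set, edge set a subset of that of G) such that in G₀: every vertex that is non-absorbing in G has out-degree exactly 2, in-degree at most 2, and every such vertex of in-degree 2 has an ancestor in G₀ of in-degree less than 2. Then G is absorbing: from every vertex of G there is a directed path in G to a vertex with no outgoing edges in G. -/

import Mathlib

/-- A vertex is absorbing if it has no outgoing edges. -/
def Absorbing {V : Type*} (E : V → V → Prop) (v : V) : Prop := ∀ w, ¬ E v w

open Classical in
/-- Let `G` (edge relation `E`) contain a spanning subgraph `G₀` (edge relation
`E₀`, same vertex set, `E₀ ⊆ E`, with the same absorbing vertices) such that in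
`G₀` every vertex that is non-absorbing in `G` has out-degree exactly 2,
in-degree at most 2, and every such vertex of in-degree 2 has an ancestor in
`G₀` of in-degree less than 2.  Then from every vertex there is a directed path
in `G` to a vertex with no outgoing edges in `G`. -/
theorem stmt4 {V : Type*} [Fintype V] (E E₀ : V → V → Prop)
    (hsub : ∀ v w, E₀ v w → E v w)
    (habs : ∀ v, Absorbing E₀ v ↔ Absorbing E v)
    (hout : ∀ v, ¬ Absorbing E v → (Finset.univ.filter fun w => E₀ v w).card = 2)
    (hin : ∀ v, ¬ Absorbing E v → (Finset.univ.filter fun w => E₀ w v).card ≤ 2)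
    (hanc : ∀ v, ¬ Absorbing E v → (Finset.univ.filter fun w => E₀ w v).card = 2 →
      ∃ w, Relation.TransGen E₀ w v ∧ (Finset.univ.filter fun u => E₀ u w).card < 2) :
    ∀ v, ∃ a, Relation.ReflTransGen E v a ∧ Absorbing E a := by
  intro v
  by_contra hcon
  push_neg at hcon
  -- the set of vertices reachable from v in E₀
  set S : Finset V := Finset.univ.filter (fun u => Relation.ReflTransGen E₀ v u) with hS
  have hmemS : ∀ u, u ∈ S ↔ Relation.ReflTransGen E₀ v u := by
    intro u; simp [hS]
  have hvS : v ∈ S := (hmemS v).2 Relation.ReflTransGen.refl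
  -- every vertex in S is non-absorbing in E
  have hna : ∀ u ∈ S, ¬ Absorbing E u := by
    intro u hu ha
    exact hcon u (Relation.ReflTransGen.mono hsub _ _ ((hmemS u).1 hu)) ha
  -- out-neighbors of vertices of S lie in S
  have houtS : ∀ u ∈ S, ∀ w, E₀ u w → w ∈ S := by
    intro u hu w hw
    exact (hmemS w).2 (((hmemS u).1 hu).tail hw)
  have hfilt_out : ∀ u ∈ S, S.filter (fun w => E₀ u w) = Finset.univ.filter (fun w => E₀ u w) := by
    intro u hu
    apply Finset.Subset.antisymm (Finset.filter_subset_filter _ (Finset.subset_univ S))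
    intro w hw
    rw [Finset.mem_filter] at hw ⊢
    exact ⟨houtS u hu w hw.2, hw.2⟩
  -- double counting
  have hsum : ∑ u ∈ S, (S.filter (fun w => E₀ u w)).card
      = ∑ w ∈ S, (S.filter (fun u => E₀ u w)).card := by
    simp only [Finset.card_filter]
    exact Finset.sum_comm
  have hleft : ∑ u ∈ S, (S.filter (fun w => E₀ u w)).card = 2 * S.card := by
    rw [Finset.sum_congr rfl (fun u hu => by rw [hfilt_out u hu, hout u (hna u hu)])]
    simp [mul_comm]
  have hle2 : ∀ w ∈ S, (S.filter (fun u => E₀ u w)).card ≤ 2 := by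
    intro w hw
    exact le_trans (Finset.card_le_card
      (Finset.filter_subset_filter _ (Finset.subset_univ S))) (hin w (hna w hw))
  have heach : ∀ w ∈ S, (S.filter (fun u => E₀ u w)).card = 2 := by
    have htot : ∑ w ∈ S, (S.filter (fun u => E₀ u w)).card = ∑ w ∈ S, 2 := by
      rw [← hsum, hleft]; simp [mul_comm]
    exact fun w hw => (Finset.sum_eq_sum_iff_of_le hle2).1 htot w hw
  -- in-neighbors of vertices of S lie in S
  have hinS : ∀ w ∈ S, ∀ u, E₀ u w → u ∈ S := by
    intro w hw u hu
    have h1 : Finset.univ.filter (fun u => E₀ u w) ⊆ S.filter (fun u => E₀ u w) := by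
      apply Finset.subset_of_eq
      symm
      apply Finset.eq_of_subset_of_card_le
        (Finset.filter_subset_filter _ (Finset.subset_univ S))
      rw [heach w hw]
      exact hin w (hna w hw)
    have : u ∈ S.filter (fun u => E₀ u w) := h1 (by simp [hu])
    exact (Finset.mem_filter.1 this).1
  -- full in-degree of every vertex of S is 2
  have hindeg : ∀ w ∈ S, (Finset.univ.filter (fun u => E₀ u w)).card = 2 := by
    intro w hw
    refine le_antisymm (hin w (hna w hw)) ?_
    rw [← heach w hw]
    exact Finset.card_le_card (Finset.filter_subset_filter _ (Finset.subset_univ S))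
  -- apply hanc at v
  obtain ⟨w, hwv, hwlt⟩ := hanc v (hna v hvS) (hindeg v hvS)
  -- w lies in S, by induction along the path
  have hwS : ∀ x, Relation.TransGen E₀ w x → x ∈ S → w ∈ S := by
    intro x hx
    induction hx with
    | single h => exact fun hxS => hinS _ hxS w h
    | tail _ h ih => exact fun hyS => ih (hinS _ hyS _ h)
  have : w ∈ S := hwS v hwv hvS
  rw [hindeg w this] at hwlt
  exact lt_irrefl 2 hwlt
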